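/- If Σ₁ and Σ₂ are positive semidefinite d×d real matrices that commute (Σ₁Σ₂ = Σ₂Σ₁), then tr(Σ₁ + Σ₂ − 2(Σ₁^{1/2} Σ₂ Σ₁^{1/2})^{1/2}) = ‖Σ₁^{1/2} − Σ₂^{1/2}‖_F², where ‖A‖_F = (tr(AᵀA))^{1/2} is the Frobenius norm. -/

import Mathlib

namespace Matrix.PosSemidef

/-- The positive semidefinite square root of a positive semidefinite matrix
(the definition Mathlib had in December 2024, since removed). -/
noncomputable def sqrt {n 𝕜 : Type*} [Fintype n] [RCLike 𝕜] [PartialOrder 𝕜] [DecidableEq n]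
    {A : Matrix n n 𝕜} (hA : A.PosSemidef) : Matrix n n 𝕜 :=
  hA.1.eigenvectorUnitary.1 * Matrix.diagonal ((↑) ∘ (√·) ∘ hA.1.eigenvalues) *
  (star hA.1.eigenvectorUnitary : Matrix n n 𝕜)

end Matrix.PosSemidef

section SqrtHelpers
open scoped MatrixOrder

namespace Matrix.PosSemidef

lemma sqrt_eq_hcfc {n : Type*} [Fintype n] [DecidableEq n]
    {A : Matrix n n ℝ} (hA : A.PosSemidef) : hA.sqrt = hA.1.cfc Real.sqrt := by
  simp [sqrt, Matrix.IsHermitian.cfc, Unitary.conjStarAlgAut_apply]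

lemma sqrt_eq_csqrt {n : Type*} [Fintype n] [DecidableEq n]
    {A : Matrix n n ℝ} (hA : A.PosSemidef) : hA.sqrt = CFC.sqrt A := by
  rw [CFC.sqrt_eq_real_sqrt A hA.nonneg, cfcₙ_eq_cfc, hA.1.cfc_eq, sqrt_eq_hcfc]

lemma posSemidef_sqrt {n : Type*} [Fintype n] [DecidableEq n]
    {A : Matrix n n ℝ} (hA : A.PosSemidef) : hA.sqrt.PosSemidef := by
  rw [sqrt_eq_csqrt]; exact Matrix.nonneg_iff_posSemidef.mp (CFC.sqrt_nonneg A)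

lemma sqrt_mul_self {n : Type*} [Fintype n] [DecidableEq n]
    {A : Matrix n n ℝ} (hA : A.PosSemidef) : hA.sqrt * hA.sqrt = A := by
  rw [sqrt_eq_csqrt]; exact CFC.sqrt_mul_sqrt_self A hA.nonneg

lemma eq_sqrt_of_sq_eq {n : Type*} [Fintype n] [DecidableEq n]
    {A : Matrix n n ℝ} (hA : A.PosSemidef) {B : Matrix n n ℝ} (hB : B.PosSemidef)
    (hAB : A ^ 2 = B) : A = hB.sqrt := by
  rw [sqrt_eq_csqrt, ← hAB, CFC.sqrt_sq A hA.nonneg]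

end Matrix.PosSemidef

end SqrtHelpers


open Polynomial in
lemma my_commute_aeval {R A : Type*} [CommSemiring R] [Semiring A] [Algebra R A]
    {a b : A} (h : Commute a b) (q : R[X]) : Commute (aeval a q) b := by
  induction q using Polynomial.induction_on with
  | C r => simpa using (Algebra.commute_algebraMap_left r b)
  | add p q hp hq => simpa [map_add] using hp.add_left hq
  | monomial n r hq =>
    simp only [map_mul, aeval_C, map_pow, aeval_X]
    exact (Algebra.commute_algebraMap_left r b).mul_left (h.pow_left (n + 1))

lemma my_sqrt_commute {n : Type*} [Fintype n] [DecidableEq n]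
    {A : Matrix n n ℝ} (hA : A.PosSemidef) {B : Matrix n n ℝ}
    (hB : Commute A B) : Commute hA.sqrt B := by
  have hfin := A.finite_real_spectrum (𝕜 := ℝ)
  set s := hfin.toFinset with hs
  obtain ⟨q, hq⟩ : ∃ q : Polynomial ℝ, ∀ x ∈ spectrum ℝ A, q.eval x = Real.sqrt x := by
    refine ⟨Lagrange.interpolate s id Real.sqrt, fun x hx => ?_⟩
    exact Lagrange.eval_interpolate_at_node (r := Real.sqrt) (Set.injOn_id _)
      (hfin.mem_toFinset.2 hx)
  have hsa : IsSelfAdjoint A := hA.1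
  have key : hA.sqrt = Polynomial.aeval A q := by
    have e1 : hA.sqrt = hA.1.cfc Real.sqrt := hA.sqrt_eq_hcfc
    rw [e1, ← Matrix.IsHermitian.cfc_eq]
    calc cfc Real.sqrt A = cfc q.eval A := cfc_congr (fun x hx => (hq x hx).symm)
      _ = Polynomial.aeval A q := cfc_polynomial q A
  rw [key]
  exact my_commute_aeval hB q

/-- If `S1` and `S2` are commuting positive semidefinite matrices, then
`tr(S1 + S2 - 2 (S1^{1/2} S2 S1^{1/2})^{1/2}) = ‖S1^{1/2} - S2^{1/2}‖_F²`. -/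
theorem commuting_psd_trace_eq_frobenius_sq {d : ℕ}
    {S1 S2 : Matrix (Fin d) (Fin d) ℝ}
    (h1 : S1.PosSemidef) (h2 : S2.PosSemidef)
    (hcomm : S1 * S2 = S2 * S1)
    (h12 : (h1.sqrt * S2 * h1.sqrt).PosSemidef) :
    (S1 + S2 - (2 : ℝ) • h12.sqrt).trace
      = ((h1.sqrt - h2.sqrt).transpose * (h1.sqrt - h2.sqrt)).trace := by
  have ha := h1.posSemidef_sqrt
  have hb := h2.posSemidef_sqrt
  have c1 : Commute h1.sqrt S2 := my_sqrt_commute h1 hcomm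
  have c2 : Commute h2.sqrt h1.sqrt := my_sqrt_commute h2 c1.symm
  have ct : Commute hb.sqrt h1.sqrt := my_sqrt_commute hb c2
  have hP : (h1.sqrt * h2.sqrt).PosSemidef := by
    have e : h1.sqrt * h2.sqrt = hb.sqrt * h1.sqrt * (hb.sqrt).conjTranspose := by
      rw [hb.posSemidef_sqrt.1.eq, ct.eq, mul_assoc, hb.sqrt_mul_self]
    rw [e]
    exact ha.mul_mul_conjTranspose_same _
  have hsq : (h1.sqrt * h2.sqrt) ^ 2 = h1.sqrt * S2 * h1.sqrt := by
    rw [pow_two]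
    calc h1.sqrt * h2.sqrt * (h1.sqrt * h2.sqrt)
        = h1.sqrt * (h2.sqrt * (h1.sqrt * h2.sqrt)) := by rw [mul_assoc]
      _ = h1.sqrt * (h2.sqrt * h1.sqrt * h2.sqrt) := by rw [← mul_assoc h2.sqrt]
      _ = h1.sqrt * (h1.sqrt * h2.sqrt * h2.sqrt) := by rw [c2.eq]
      _ = h1.sqrt * (h1.sqrt * (h2.sqrt * h2.sqrt)) := by rw [mul_assoc h1.sqrt h2.sqrt]
      _ = h1.sqrt * (h1.sqrt * S2) := by rw [h2.sqrt_mul_self]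
      _ = h1.sqrt * (S2 * h1.sqrt) := by rw [c1.eq]
      _ = h1.sqrt * S2 * h1.sqrt := by rw [mul_assoc]
  have hPsqrt : h1.sqrt * h2.sqrt = h12.sqrt := hP.eq_sqrt_of_sq_eq h12 hsq
  have hat : h1.sqrt.transpose = h1.sqrt := by
    rw [← Matrix.conjTranspose_eq_transpose_of_trivial]; exact ha.1
  have hbt : h2.sqrt.transpose = h2.sqrt := by
    rw [← Matrix.conjTranspose_eq_transpose_of_trivial]; exact hb.1
  have hmat : S1 + S2 - (2 : ℝ) • h12.sqrt
      = (h1.sqrt - h2.sqrt).transpose * (h1.sqrt - h2.sqrt) := by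
    rw [← hPsqrt, Matrix.transpose_sub, hat, hbt, Matrix.sub_mul, Matrix.mul_sub,
      Matrix.mul_sub, h1.sqrt_mul_self, h2.sqrt_mul_self, c2.eq, two_smul]
    abel
  rw [hmat]
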